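/- Suppose the structure function has the form φ(x) = ψ(x_1,...,x_{i-1}, 1-(1-x_i)(1-χ(x_{i+1},...,x_n))) where ψ and χ are coherent structure functions (component i parallel to a coherent module). If component j > i belongs to the module and p_i ≥ p_j, then Cov(X_i, φ(X)) ≥ Cov(X_j, φ(X)). -/

import Mathlib

open MeasureTheory ProbabilityTheory

noncomputable def cov {Ω : Type*} [MeasurableSpace Ω] (μ : Measure Ω) (U V : Ω → ℝ) : ℝ :=
  (∫ ω, U ω * V ω ∂μ) - (∫ ω, U ω ∂μ) * (∫ ω, V ω ∂μ)

def b2r (x : Bool) : ℝ := if x then 1 else 0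

noncomputable def rel {n : ℕ} (φ : (Fin n → Bool) → Bool) (p : Fin n → ℝ) : ℝ :=
  ∑ x : Fin n → Bool, (if φ x then (1:ℝ) else 0) * ∏ i, (if x i then p i else 1 - p i)

open Finset in
section

namespace StmtNine

variable {n : ℕ}

/-- weight of an atom -/
noncomputable def w (p : Fin n → ℝ) (x : Fin n → Bool) : ℝ :=
  ∏ k, (if x k then p k else 1 - p k)

/-- discrete expectation -/
noncomputable def Ew (p : Fin n → ℝ) (f : (Fin n → Bool) → ℝ) : ℝ :=
  ∑ x : Fin n → Bool, f x * w p x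

/-- flip coordinate k equivalence -/
def flipE (k : Fin n) : (Fin n → Bool) ≃ (Fin n → Bool) where
  toFun x := Function.update x k (!(x k))
  invFun x := Function.update x k (!(x k))
  left_inv x := by
    simp [Function.update_idem, Function.update_self]
  right_inv x := by
    simp [Function.update_idem, Function.update_self]

lemma sum_flip_zero (k : Fin n) (H : (Fin n → Bool) → ℝ)
    (h : ∀ x, H (Function.update x k (!(x k))) = - H x) :
    ∑ x : Fin n → Bool, H x = 0 := by
  have h1 : ∑ x : Fin n → Bool, H x = ∑ x : Fin n → Bool, H (flipE k x) :=
    (Equiv.sum_comp (flipE k) H).symm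
  have h2 : ∑ x : Fin n → Bool, H (flipE k x) = - ∑ x : Fin n → Bool, H x := by
    simp only [flipE, Equiv.coe_fn_mk, h, Finset.sum_neg_distrib]
  linarith [h1, h2]

lemma w_update (p : Fin n → ℝ) (x : Fin n → Bool) (k : Fin n) (b : Bool) :
    w p (Function.update x k b) =
      (if b then p k else 1 - p k) * ∏ l ∈ Finset.univ.erase k, (if x l then p l else 1 - p l) := by
  have : (fun l => if Function.update x k b l then p l else 1 - p l) =
      Function.update (fun l => if x l then p l else 1 - p l) k (if b then p k else 1 - p k) := by
    funext l
    rcases eq_or_ne l k with rfl | hl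
    · simp
    · simp [Function.update_of_ne hl]
  rw [w, this, Finset.prod_update_of_mem (Finset.mem_univ k), Finset.erase_eq]

lemma condExp (p : Fin n → ℝ) (k : Fin n) (f : (Fin n → Bool) → ℝ) :
    Ew p f = p k * Ew p (fun x => f (Function.update x k true)) +
      (1 - p k) * Ew p (fun x => f (Function.update x k false)) := by
  have key : ∑ x : Fin n → Bool,
      (f x * w p x - p k * (f (Function.update x k true) * w p x)
        - (1 - p k) * (f (Function.update x k false) * w p x)) = 0 := by
    apply sum_flip_zero k
    intro x
    set R := ∏ l ∈ Finset.univ.erase k, (if x l then p l else 1 - p l) with hR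
    have hRflip : ∀ b : Bool, ∏ l ∈ Finset.univ.erase k,
        (if (Function.update x k b) l then p l else 1 - p l) = R := by
      intro b
      apply Finset.prod_congr rfl
      intro l hl
      rw [Function.update_of_ne (Finset.ne_of_mem_erase hl)]
    cases hb : x k
    · -- x k = false
      have hx : Function.update x k false = x := by
        rw [← hb]; exact Function.update_eq_self k x
      have hwx : w p x = (1 - p k) * R := by
        rw [← hx, w_update]; simp [hR]
      have hwf : w p (Function.update x k (!(x k))) = p k * R := by
        rw [hb]
        show w p (Function.update x k true) = p k * R
        rw [w_update]; simp [hR]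
      simp only [Bool.not_false, Function.update_idem]
      have : w p (Function.update x k true) = p k * R := by rw [w_update]; simp [hR]
      rw [this, hwx, hx]
      ring
    · -- x k = true
      have hx : Function.update x k true = x := by
        rw [← hb]; exact Function.update_eq_self k x
      have hwx : w p x = p k * R := by
        rw [← hx, w_update]; simp [hR]
      simp only [Bool.not_true, Function.update_idem]
      have : w p (Function.update x k false) = (1 - p k) * R := by rw [w_update]; simp [hR]
      rw [this, hwx, hx]
      ring
  have expand : ∑ x : Fin n → Bool,
      (f x * w p x - p k * (f (Function.update x k true) * w p x)
        - (1 - p k) * (f (Function.update x k false) * w p x))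
      = Ew p f - p k * Ew p (fun x => f (Function.update x k true))
        - (1 - p k) * Ew p (fun x => f (Function.update x k false)) := by
    simp only [Ew, Finset.sum_sub_distrib, Finset.mul_sum]
  rw [expand] at key
  linarith

end StmtNine

namespace StmtNine

variable {n : ℕ}

lemma w_nonneg {p : Fin n → ℝ} (hp0 : ∀ k, 0 ≤ p k) (hp1 : ∀ k, p k ≤ 1) (x : Fin n → Bool) :
    0 ≤ w p x := by
  apply Finset.prod_nonneg
  intro l _
  cases x l <;> simp
  · linarith [hp1 l]
  · exact hp0 l

lemma Ew_mono {p : Fin n → ℝ} (hp0 : ∀ k, 0 ≤ p k) (hp1 : ∀ k, p k ≤ 1)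
    {f g : (Fin n → Bool) → ℝ} (h : ∀ x, f x ≤ g x) : Ew p f ≤ Ew p g := by
  apply Finset.sum_le_sum
  intro x _
  exact mul_le_mul_of_nonneg_right (h x) (w_nonneg hp0 hp1 x)

lemma Ew_nonneg {p : Fin n → ℝ} (hp0 : ∀ k, 0 ≤ p k) (hp1 : ∀ k, p k ≤ 1)
    {f : (Fin n → Bool) → ℝ} (h : ∀ x, 0 ≤ f x) : 0 ≤ Ew p f := by
  have : Ew p (fun _ => (0:ℝ)) ≤ Ew p f := Ew_mono hp0 hp1 h
  simpa [Ew] using this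

lemma Ew_congr {p : Fin n → ℝ} {f g : (Fin n → Bool) → ℝ} (h : ∀ x, f x = g x) :
    Ew p f = Ew p g := by
  simp only [Ew]
  exact Finset.sum_congr rfl fun x _ => by rw [h x]

/-- discrete covariance formula -/
lemma dcov_eq (p : Fin n → ℝ) (k : Fin n) (f : (Fin n → Bool) → ℝ) :
    Ew p (fun x => (if x k then (1:ℝ) else 0) * f x) - p k * Ew p f
      = p k * (1 - p k) *
        (Ew p (fun x => f (Function.update x k true))
          - Ew p (fun x => f (Function.update x k false))) := by
  have h1 := condExp p k (fun x => (if x k then (1:ℝ) else 0) * f x)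
  have h2 := condExp p k f
  simp only [Function.update_self] at h1
  have e0 : Ew p (fun x => (if false = true then (1:ℝ) else 0) * f (Function.update x k false))
      = 0 := by simp [Ew]
  have e1 : Ew p (fun x => (if True then (1:ℝ) else 0) * f (Function.update x k true))
      = Ew p (fun x => f (Function.update x k true)) := Ew_congr (by simp)
  rw [h1, h2, e0, e1]
  ring

/-- expectation of g·(1 - 1_{x k = true}) when g doesn't depend on coordinate k -/
lemma Ew_mul_one_sub (p : Fin n → ℝ) (k : Fin n) (g : (Fin n → Bool) → ℝ)
    (hg : ∀ x b, g (Function.update x k b) = g x) :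
    Ew p (fun x => g x * (1 - (if x k then (1:ℝ) else 0))) = (1 - p k) * Ew p g := by
  have h := condExp p k (fun x => g x * (1 - (if x k then (1:ℝ) else 0)))
  rw [h]
  have e1 : Ew p (fun x => g (Function.update x k true) *
      (1 - (if Function.update x k true k then (1:ℝ) else 0))) = 0 := by
    simp [Ew]
  have e2 : Ew p (fun x => g (Function.update x k false) *
      (1 - (if Function.update x k false k then (1:ℝ) else 0))) = Ew p g := by
    apply Ew_congr
    intro x
    simp [hg]
  simp only [Function.update_self] at e1 e2 ⊢
  rw [e1, e2]
  ring

end StmtNine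


namespace StmtNine

variable {n : ℕ}

lemma b2r_nonneg (b : Bool) : 0 ≤ b2r b := by cases b <;> simp [b2r]
lemma b2r_le_one (b : Bool) : b2r b ≤ 1 := by cases b <;> simp [b2r]

lemma b2r_mono {a b : Bool} (h : a ≤ b) : b2r a ≤ b2r b := by
  cases a <;> cases b <;> simp [b2r] <;> exact absurd h (by decide)

lemma Ew_sub (p : Fin n → ℝ) (f g : (Fin n → Bool) → ℝ) :
    Ew p f - Ew p g = Ew p (fun x => f x - g x) := by
  simp [Ew, sub_mul, Finset.sum_sub_distrib]

theorem discrete_main (p : Fin n → ℝ) (hp0 : ∀ k, 0 ≤ p k) (hp1 : ∀ k, p k ≤ 1)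
    (A : Finset (Fin n)) (i j : Fin n) (hiA : i ∉ A) (hjA : j ∈ A)
    (ψ χ : (Fin n → Bool) → Bool)
    (hχdep : ∀ x y : Fin n → Bool, (∀ k ∈ A, x k = y k) → χ x = χ y)
    (hψdep : ∀ x y : Fin n → Bool, (∀ k, k ∉ A → x k = y k) → ψ x = ψ y)
    (hψmono : Monotone ψ) (hχmono : Monotone χ)
    (φ : (Fin n → Bool) → Bool)
    (hφ : ∀ x, φ x = ψ (Function.update x i (x i || χ x)))
    (hij : p j ≤ p i) :
    Ew p (fun x => (if x j then (1:ℝ) else 0) * b2r (φ x)) - p j * Ew p (fun x => b2r (φ x))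
      ≤ Ew p (fun x => (if x i then (1:ℝ) else 0) * b2r (φ x))
        - p i * Ew p (fun x => b2r (φ x)) := by
  have hij' : i ≠ j := fun h => hiA (h ▸ hjA)
  set δ : (Fin n → Bool) → ℝ := fun x =>
    b2r (ψ (Function.update x i true)) - b2r (ψ (Function.update x i false)) with hδdef
  set e : (Fin n → Bool) → ℝ := fun x =>
    b2r (χ (Function.update x j true)) - b2r (χ (Function.update x j false)) with hedef
  -- nonnegativity of δ and e
  have hδ : ∀ x, 0 ≤ δ x := by
    intro x
    have hle : Function.update x i false ≤ Function.update x i true := by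
      intro l
      rcases eq_or_ne l i with rfl | hl
      · simp
      · simp [Function.update_of_ne hl]
    simp only [hδdef]
    exact sub_nonneg.mpr (b2r_mono (hψmono hle))
  have he : ∀ x, 0 ≤ e x := by
    intro x
    have hle : Function.update x j false ≤ Function.update x j true := by
      intro l
      rcases eq_or_ne l j with rfl | hl
      · simp
      · simp [Function.update_of_ne hl]
    simp only [hedef]
    exact sub_nonneg.mpr (b2r_mono (hχmono hle))
  -- δ doesn't depend on coordinates in A (in particular j); e doesn't depend on i
  have hδupd : ∀ (x : Fin n → Bool) (k : Fin n), k ∈ A → ∀ b,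
      δ (Function.update x k b) = δ x := by
    intro x k hk b
    have hψeq : ∀ t : Bool,
        ψ (Function.update (Function.update x k b) i t) = ψ (Function.update x i t) := by
      intro t
      apply hψdep
      intro l hl
      rcases eq_or_ne l i with rfl | hli
      · simp
      · have hlk : l ≠ k := fun h => hl (h ▸ hk)
        simp [Function.update_of_ne hli, Function.update_of_ne hlk]
    simp only [hδdef, hψeq]
  have hδupdi : ∀ (x : Fin n → Bool) (b : Bool), δ (Function.update x i b) = δ x := by
    intro x b
    simp only [hδdef, Function.update_idem]
  have heupdj : ∀ (x : Fin n → Bool) (b : Bool), e (Function.update x j b) = e x := by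
    intro x b
    simp only [hedef, Function.update_idem]
  have heupdi : ∀ (x : Fin n → Bool) (b : Bool), e (Function.update x i b) = e x := by
    intro x b
    have hχeq : ∀ t : Bool,
        χ (Function.update (Function.update x i b) j t) = χ (Function.update x j t) := by
      intro t
      apply hχdep
      intro l hl
      have hli : l ≠ i := fun h => hiA (h ▸ hl)
      rcases eq_or_ne l j with rfl | hlj
      · simp
      · simp [Function.update_of_ne hlj, Function.update_of_ne hli]
    simp only [hedef, hχeq]
  -- pivotal decomposition identities
  have hDi : ∀ x, b2r (φ (Function.update x i true)) - b2r (φ (Function.update x i false))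
      = δ x * (1 - b2r (χ x)) := by
    intro x
    have h1 : φ (Function.update x i true) = ψ (Function.update x i true) := by
      rw [hφ]
      simp [Function.update_idem]
    have hχ0 : χ (Function.update x i false) = χ x := by
      apply hχdep
      intro l hl
      have : l ≠ i := fun h => hiA (h ▸ hl)
      simp [Function.update_of_ne this]
    have h0 : φ (Function.update x i false) = ψ (Function.update x i (χ x)) := by
      rw [hφ]
      simp [Function.update_idem, hχ0]
    rw [h1, h0]
    cases hc : χ x
    · simp [b2r, hδdef]
    · simp [b2r, hδdef]
  have hDj : ∀ x, b2r (φ (Function.update x j true)) - b2r (φ (Function.update x j false))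
      = δ x * e x * (1 - b2r (x i)) := by
    intro x
    have key : ∀ t : Bool, φ (Function.update x j t)
        = ψ (Function.update x i (x i || χ (Function.update x j t))) := by
      intro t
      rw [hφ]
      have hxi : Function.update x j t i = x i := Function.update_of_ne hij' _ _
      rw [hxi]
      apply hψdep
      intro l hl
      rcases eq_or_ne l i with rfl | hli
      · simp
      · have hlj : l ≠ j := fun h => hl (h ▸ hjA)
        simp [Function.update_of_ne hli, Function.update_of_ne hlj]
    rw [key true, key false]
    cases hxi : x i
    · simp only [Bool.false_or]
      cases hct : χ (Function.update x j true) <;> cases hcf : χ (Function.update x j false) <;>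
        simp [b2r, hδdef, hedef, hct, hcf, hxi] <;> ring
    · simp only [Bool.true_or]
      simp [b2r, hxi]
  -- pointwise inequality for the i-direction
  have hpt : ∀ x, δ x * e x * (1 - (if x j then (1:ℝ) else 0))
      ≤ δ x * (1 - b2r (χ x)) := by
    intro x
    cases hxj : x j
    · simp only [if_neg, Bool.false_eq_true, not_false_iff]
      have hx : Function.update x j false = x := by
        rw [← hxj]; exact Function.update_eq_self j x
      have he' : e x = b2r (χ (Function.update x j true)) - b2r (χ x) := by
        simp only [hedef, hx]
      rw [he']
      have h1 := b2r_le_one (χ (Function.update x j true))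
      have h2 := b2r_nonneg (χ x)
      have h3 := hδ x
      nlinarith
    · simp only [if_pos]
      have h1 := b2r_le_one (χ x)
      have h3 := hδ x
      nlinarith
  -- assemble
  have hd1 := dcov_eq p i (fun x => b2r (φ x))
  have hd2 := dcov_eq p j (fun x => b2r (φ x))
  have hBi : Ew p (fun x => b2r (φ (Function.update x i true)))
      - Ew p (fun x => b2r (φ (Function.update x i false)))
      = Ew p (fun x => δ x * (1 - b2r (χ x))) := by
    rw [Ew_sub]; exact Ew_congr hDi
  have hBj : Ew p (fun x => b2r (φ (Function.update x j true)))
      - Ew p (fun x => b2r (φ (Function.update x j false)))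
      = (1 - p i) * Ew p (fun x => δ x * e x) := by
    rw [Ew_sub]
    rw [Ew_congr hDj]
    have h2 := Ew_mul_one_sub p i (fun x => δ x * e x)
      (fun x b => by
        show δ (Function.update x i b) * e (Function.update x i b) = δ x * e x
        rw [hδupdi, heupdi])
    rw [← h2]
    apply Ew_congr
    intro x
    simp [b2r]
  have hlow : (1 - p j) * Ew p (fun x => δ x * e x)
      ≤ Ew p (fun x => δ x * (1 - b2r (χ x))) := by
    have h1 : Ew p (fun x => δ x * e x * (1 - (if x j then (1:ℝ) else 0)))
        ≤ Ew p (fun x => δ x * (1 - b2r (χ x))) := Ew_mono hp0 hp1 hpt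
    have h2 := Ew_mul_one_sub p j (fun x => δ x * e x)
      (fun x b => by
        show δ (Function.update x j b) * e (Function.update x j b) = δ x * e x
        rw [hδupd x j hjA, heupdj])
    rw [← h2]
    exact h1
  have hEg : 0 ≤ Ew p (fun x => δ x * e x) :=
    Ew_nonneg hp0 hp1 (fun x => mul_nonneg (hδ x) (he x))
  rw [hd1, hd2, hBj, hBi]
  have hA : 0 ≤ (1 - p i) * ((1 - p j) * Ew p (fun x => δ x * e x)) :=
    mul_nonneg (by linarith [hp1 i]) (mul_nonneg (by linarith [hp1 j]) hEg)
  have hB : p i * (1 - p i) * ((1 - p j) * Ew p (fun x => δ x * e x))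
      ≤ p i * (1 - p i) * Ew p (fun x => δ x * (1 - b2r (χ x))) :=
    mul_le_mul_of_nonneg_left hlow (mul_nonneg (hp0 i) (by linarith [hp1 i]))
  have hC : 0 ≤ (p i - p j) * ((1 - p i) * ((1 - p j) * Ew p (fun x => δ x * e x))) :=
    mul_nonneg (by linarith) hA
  nlinarith [hB, hC]

end StmtNine

namespace StmtNine

open MeasureTheory ProbabilityTheory

lemma integral_eq_Ew {Ω : Type*} [MeasurableSpace Ω] (μ : Measure Ω) [IsProbabilityMeasure μ]
    {n : ℕ} (X : Fin n → Ω → Bool) (hmeas : ∀ k, Measurable (X k))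
    (hindep : iIndepFun X μ)
    (f : (Fin n → Bool) → ℝ) :
    ∫ ω, f (fun k => X k ω) ∂μ
      = Ew (fun k => (μ {ω | X k ω = true}).toReal) f := by
  set p : Fin n → ℝ := fun k => (μ {ω | X k ω = true}).toReal with hp
  have hY : Measurable (fun ω (k : Fin n) => X k ω) := measurable_pi_lambda _ hmeas
  have hfmeas : Measurable f := measurable_of_countable f
  have hprob : IsProbabilityMeasure (μ.map (fun ω (k : Fin n) => X k ω)) :=
    Measure.isProbabilityMeasure_map hY.aemeasurable
  have h1 : ∫ ω, f (fun k => X k ω) ∂μ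
      = ∫ x, f x ∂(μ.map (fun ω (k : Fin n) => X k ω)) :=
    (integral_map hY.aemeasurable hfmeas.aestronglyMeasurable).symm
  rw [h1, integral_fintype (Integrable.of_finite)]
  have hatom : ∀ x : Fin n → Bool,
      (μ.map (fun ω (k : Fin n) => X k ω)) {x} = ∏ k, μ (X k ⁻¹' {x k}) := by
    intro x
    rw [Measure.map_apply hY (measurableSet_singleton x)]
    have hpre : (fun ω (k : Fin n) => X k ω) ⁻¹' {x} = ⋂ k, X k ⁻¹' {x k} := by
      ext ω
      simp [Set.mem_iInter, funext_iff]
    rw [hpre]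
    have h := (iIndepFun_iff_measure_inter_preimage_eq_mul.mp hindep) Finset.univ
      (sets := fun k => {x k}) (fun k _ => measurableSet_singleton _)
    simpa using h
  have hw : ∀ x : Fin n → Bool,
      ((μ.map (fun ω (k : Fin n) => X k ω)) {x}).toReal = w p x := by
    intro x
    rw [hatom x, ENNReal.toReal_prod, w]
    apply Finset.prod_congr rfl
    intro k _
    have hset : X k ⁻¹' {true} = {ω | X k ω = true} := by ext ω; simp
    cases hxk : x k
    · have hsetf : X k ⁻¹' {false} = {ω | X k ω = true}ᶜ := by
        ext ω; cases h : X k ω <;> simp [h]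
      have hms : MeasurableSet {ω | X k ω = true} := by
        rw [← hset]; exact hmeas k (measurableSet_singleton _)
      rw [hsetf, prob_compl_eq_one_sub hms,
        ENNReal.toReal_sub_of_le prob_le_one ENNReal.one_ne_top]
      simp [hp]
    · rw [hset]
      simp [hp]
  simp only [measureReal_def, hw, smul_eq_mul, Ew]
  exact Finset.sum_congr rfl fun x _ => mul_comm _ _

end StmtNine

namespace StmtNine

open MeasureTheory ProbabilityTheory

lemma Ew_one {n : ℕ} (p : Fin n → ℝ) : Ew p (fun _ => (1:ℝ)) = 1 := by
  have h := Fintype.prod_sum (fun (k : Fin n) (b : Bool) => if b then p k else 1 - p k)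
  simp only [Ew, w, one_mul]
  rw [← h]
  apply Finset.prod_eq_one
  intro k _
  simp

lemma Ew_coord {n : ℕ} (p : Fin n → ℝ) (k : Fin n) :
    Ew p (fun x => (if x k then (1:ℝ) else 0)) = p k := by
  have h := condExp p k (fun x => (if x k then (1:ℝ) else 0))
  simp only [Function.update_self] at h
  rw [h]
  have e1 : Ew p (fun x : Fin n → Bool => (if True then (1:ℝ) else 0)) = 1 := by
    simpa using Ew_one p
  have e0 : Ew p (fun x : Fin n → Bool => (if false = true then (1:ℝ) else 0)) = 0 := by
    simp [Ew]
  rw [e1, e0]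
  ring

end StmtNine

open MeasureTheory ProbabilityTheory in
theorem stmt9' {Ω : Type*} [MeasurableSpace Ω] (μ : Measure Ω) [IsProbabilityMeasure μ]
    {n : ℕ} (X : Fin n → Ω → Bool) (hmeas : ∀ k, Measurable (X k))
    (hindep : iIndepFun X μ)
    (A : Finset (Fin n)) (i j : Fin n) (hiA : i ∉ A) (hjA : j ∈ A)
    (ψ χ : (Fin n → Bool) → Bool)
    (hχdep : ∀ x y : Fin n → Bool, (∀ k ∈ A, x k = y k) → χ x = χ y)
    (hψdep : ∀ x y : Fin n → Bool, (∀ k, k ∉ A → x k = y k) → ψ x = ψ y)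
    (hψmono : Monotone ψ) (hχmono : Monotone χ)
    (φ : (Fin n → Bool) → Bool)
    (hφ : ∀ x, φ x = ψ (Function.update x i (x i || χ x)))
    (hij : μ {ω | X j ω = true} ≤ μ {ω | X i ω = true}) :
    (∫ ω, b2r (X j ω) * b2r (φ (fun k => X k ω)) ∂μ)
        - (∫ ω, b2r (X j ω) ∂μ) * (∫ ω, b2r (φ (fun k => X k ω)) ∂μ) ≤
      (∫ ω, b2r (X i ω) * b2r (φ (fun k => X k ω)) ∂μ)
        - (∫ ω, b2r (X i ω) ∂μ) * (∫ ω, b2r (φ (fun k => X k ω)) ∂μ) := by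
  set p : Fin n → ℝ := fun k => (μ {ω | X k ω = true}).toReal with hp
  have key := StmtNine.integral_eq_Ew μ X hmeas hindep
  have hp0 : ∀ k, 0 ≤ p k := fun k => ENNReal.toReal_nonneg
  have hp1 : ∀ k, p k ≤ 1 := by
    intro k
    have := ENNReal.toReal_mono ENNReal.one_ne_top (prob_le_one (α := Ω) (μ := μ)
      (s := {ω | X k ω = true}))
    simpa using this
  have hijp : p j ≤ p i := ENNReal.toReal_mono (measure_ne_top μ _) hij
  have e1 : (∫ ω, b2r (X j ω) * b2r (φ (fun k => X k ω)) ∂μ)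
      = StmtNine.Ew p (fun x => (if x j then (1:ℝ) else 0) * b2r (φ x)) :=
    key (fun x => (if x j then (1:ℝ) else 0) * b2r (φ x))
  have e2 : (∫ ω, b2r (X i ω) * b2r (φ (fun k => X k ω)) ∂μ)
      = StmtNine.Ew p (fun x => (if x i then (1:ℝ) else 0) * b2r (φ x)) :=
    key (fun x => (if x i then (1:ℝ) else 0) * b2r (φ x))
  have e3 : (∫ ω, b2r (φ (fun k => X k ω)) ∂μ)
      = StmtNine.Ew p (fun x => b2r (φ x)) := key (fun x => b2r (φ x))
  have e4 : (∫ ω, b2r (X j ω) ∂μ) = p j := by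
    have := key (fun x => (if x j then (1:ℝ) else 0))
    rw [StmtNine.Ew_coord] at this
    exact this
  have e5 : (∫ ω, b2r (X i ω) ∂μ) = p i := by
    have := key (fun x => (if x i then (1:ℝ) else 0))
    rw [StmtNine.Ew_coord] at this
    exact this
  rw [e1, e2, e3, e4, e5]
  exact StmtNine.discrete_main p hp0 hp1 A i j hiA hjA ψ χ hχdep hψdep hψmono hχmono φ hφ hijp

/-- A component parallel to a coherent module is at least as important (w.r.t.
covariance importance) as any component of the module that is at most as reliable. -/
theorem stmt9 {Ω : Type*} [MeasurableSpace Ω] (μ : Measure Ω) [IsProbabilityMeasure μ]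
    {n : ℕ} (X : Fin n → Ω → Bool) (hmeas : ∀ k, Measurable (X k))
    (hindep : iIndepFun X μ)
    (A : Finset (Fin n)) (i j : Fin n) (hiA : i ∉ A) (hjA : j ∈ A)
    (ψ χ : (Fin n → Bool) → Bool)
    (hχdep : ∀ x y : Fin n → Bool, (∀ k ∈ A, x k = y k) → χ x = χ y)
    (hψdep : ∀ x y : Fin n → Bool, (∀ k, k ∉ A → x k = y k) → ψ x = ψ y)
    (hψmono : Monotone ψ) (hχmono : Monotone χ)
    (hψrel : ∀ k, k ∉ A →
      ∃ x, ψ (Function.update x k true) ≠ ψ (Function.update x k false))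
    (hχrel : ∀ k ∈ A,
      ∃ x, χ (Function.update x k true) ≠ χ (Function.update x k false))
    (φ : (Fin n → Bool) → Bool)
    (hφ : ∀ x, φ x = ψ (Function.update x i (x i || χ x)))
    (hij : μ {ω | X j ω = true} ≤ μ {ω | X i ω = true}) :
    cov μ (fun ω => b2r (X j ω)) (fun ω => b2r (φ (fun k => X k ω))) ≤
      cov μ (fun ω => b2r (X i ω)) (fun ω => b2r (φ (fun k => X k ω))) := by
  simp only [cov]
  exact stmt9' μ X hmeas hindep A i j hiA hjA ψ χ hχdep hψdep hψmono hχmono φ hφ hij
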